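/- If an involution α on a smooth minimal surface S of general type with p_g = 0 and K_S² = 7 has trace tr(α*) on H²(S,ℂ) equal to -1, 1 or 3, and the divisorial fixed part R satisfies R² = 2 - tr(α*), and R is numerically equivalent to a positive rational multiple of K_S whenever tr(α*) = -1, then R² = ±1. -/
import Mathlib


/-- If an involution `α` on a smooth minimal surface of general type with `p_g = 0` and
`K² = 7` has trace `t = tr(α*) ∈ {-1, 1, 3}` on `H²(S,ℂ)`, the divisorial fixed part `R`
satisfies `R² = 2 - t`, and whenever `t = -1` the divisor `R` is numerically equivalent to a
positive rational multiple `r` of `K_S` (so that `R² = 7r²`), then `R² = ±1`. -/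
theorem involution_fixed_part_square (t R2 : ℤ)
    (ht : t = -1 ∨ t = 1 ∨ t = 3)
    (hR : R2 = 2 - t)
    (hneg : t = -1 → ∃ r : ℚ, 0 < r ∧ (R2 : ℚ) = 7 * r ^ 2) :
    R2 = 1 ∨ R2 = -1 := by
  rcases ht with h | h | h
  · exfalso
    obtain ⟨r, hr, hr2⟩ := hneg h
    have hR3 : (R2 : ℚ) = 3 := by rw [hR, h]; norm_num
    have h21 : IsSquare ((21 : ℕ) : ℚ) := by
      refine ⟨7 * r, ?_⟩
      push_cast
      linear_combination 7 * hr2 - 7 * hR3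
    rw [Rat.isSquare_natCast_iff] at h21
    obtain ⟨k, hk⟩ := h21
    have hk4 : k ≤ 21 := by nlinarith
    interval_cases k <;> omega
  · left; omega
  · right; omega
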